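/- Let p₀ be a probability density on R^d and define the noised density p_t(θ_t) = ∫ N(θ_t | θ₀, σ(t)² I) p₀(θ₀) dθ₀. Let r: R^d → [0,∞) be measurable with ∫ r(θ₀) p₀(θ₀) dθ₀ < ∞, and define the reweighted density q₀(θ₀) ∝ r(θ₀) p₀(θ₀) with noised version q_t(θ_t) = ∫ N(θ_t | θ₀, σ(t)² I) q₀(θ₀) dθ₀. Then q_t(θ_t) ∝ p_t(θ_t) · E_{p(θ₀|θ_t)}[r(θ₀)], where p(θ₀|θ_t) = N(θ_t | θ₀, σ(t)² I) p₀(θ₀) / p_t(θ_t), and consequently ∇_{θ_t} log q_t(θ_t) = ∇_{θ_t} log p_t(θ_t) + ∇_{θ_t} log E_{p(θ₀|θ_t)}[r(θ₀)] wherever the densities are positive and differentiable. -/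

import Mathlib

open MeasureTheory

/-- Multivariate Gaussian density `N(x | μ, Σ)` on `ℝ^d`. -/
noncomputable def gaussDensity {d : ℕ} (μ : EuclideanSpace ℝ (Fin d))
    (S : Matrix (Fin d) (Fin d) ℝ) (x : EuclideanSpace ℝ (Fin d)) : ℝ :=
  (2 * Real.pi) ^ (-(d : ℝ) / 2) * S.det ^ (-(1 : ℝ) / 2) *
    Real.exp (-(1 / 2) *
      dotProduct (fun i => x i - μ i) (S⁻¹.mulVec fun i => x i - μ i))

lemma gaussDensity_smul_one_eq {d : ℕ} (σt : ℝ) (hσt : 0 < σt)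
    (μ x : EuclideanSpace ℝ (Fin d)) :
    gaussDensity μ ((σt ^ 2) • (1 : Matrix (Fin d) (Fin d) ℝ)) x =
      ((2 * Real.pi) ^ (-(d : ℝ) / 2) * ((σt ^ 2) ^ d) ^ (-(1 : ℝ) / 2)) *
        Real.exp (-(1 / 2) * ((σt ^ 2)⁻¹ * ∑ i, (x i - μ i) ^ 2)) := by
  have hσ2 : (σt ^ 2) ≠ 0 := by positivity
  have hinv : ((σt ^ 2) • (1 : Matrix (Fin d) (Fin d) ℝ))⁻¹
      = (σt ^ 2)⁻¹ • (1 : Matrix (Fin d) (Fin d) ℝ) := by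
    apply Matrix.inv_eq_right_inv
    rw [Matrix.smul_mul, Matrix.mul_smul, Matrix.one_mul, smul_smul, mul_inv_cancel₀ hσ2,
      one_smul]
  have hdet : ((σt ^ 2) • (1 : Matrix (Fin d) (Fin d) ℝ)).det = (σt ^ 2) ^ d := by
    simp [Matrix.det_smul]
  rw [gaussDensity, hinv, hdet]
  congr 1
  congr 1
  rw [Matrix.smul_mulVec, Matrix.one_mulVec]
  simp only [dotProduct, Pi.smul_apply, smul_eq_mul]
  simp only [Finset.mul_sum]
  exact Finset.sum_congr rfl fun i _ => by ring

lemma gradient_add_sub_const {d : ℕ} (f g : EuclideanSpace ℝ (Fin d) → ℝ) (c : ℝ)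
    (x : EuclideanSpace ℝ (Fin d))
    (hf : DifferentiableAt ℝ f x) (hg : DifferentiableAt ℝ g x) :
    gradient (fun y => f y + g y - c) x = gradient f x + gradient g x := by
  unfold gradient
  rw [fderiv_sub_const, fderiv_fun_add hf hg, map_add]

/-- score decomposition for the reweighted noised density. -/
theorem score_decomposition_reweighted_diffusion {d : ℕ}
    (σt : ℝ) (hσt : 0 < σt)
    (p0 r : EuclideanSpace ℝ (Fin d) → ℝ)
    (hp0_nn : ∀ θ, 0 ≤ p0 θ) (hp0_int : ∫ θ, p0 θ = 1)
    (hr_meas : Measurable r) (hr_nn : ∀ θ, 0 ≤ r θ)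
    (Z : ℝ) (hZ : Z = ∫ θ, r θ * p0 θ) (hZ_pos : 0 < Z)
    (hZ_int : Integrable (fun θ => r θ * p0 θ)) :
    -- forward (noising) kernel N(θ_t | θ₀, σ(t)² I)
    let K : EuclideanSpace ℝ (Fin d) → EuclideanSpace ℝ (Fin d) → ℝ :=
      fun θt θ0 => gaussDensity θ0 ((σt ^ 2) • (1 : Matrix (Fin d) (Fin d) ℝ)) θt
    -- noised original density p_t
    let pt : EuclideanSpace ℝ (Fin d) → ℝ := fun θt => ∫ θ0, K θt θ0 * p0 θ0
    -- noised reweighted density q_t with q₀ = r·p₀ / Z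
    let qt : EuclideanSpace ℝ (Fin d) → ℝ :=
      fun θt => ∫ θ0, K θt θ0 * (r θ0 * p0 θ0 / Z)
    -- E_{p(θ₀|θ_t)}[r(θ₀)] with p(θ₀|θ_t) = K θ_t θ₀ · p₀(θ₀) / p_t(θ_t)
    let Efun : EuclideanSpace ℝ (Fin d) → ℝ :=
      fun θt => ∫ θ0, r θ0 * (K θt θ0 * p0 θ0 / pt θt)
    (∀ θt, 0 < pt θt → qt θt = (1 / Z) * (pt θt * Efun θt)) ∧
    (∀ θt, 0 < pt θt → 0 < Efun θt →
      DifferentiableAt ℝ (fun θ => Real.log (pt θ)) θt →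
      DifferentiableAt ℝ (fun θ => Real.log (Efun θ)) θt →
      gradient (fun θ => Real.log (qt θ)) θt =
        gradient (fun θ => Real.log (pt θ)) θt +
          gradient (fun θ => Real.log (Efun θ)) θt) := by
  intro K pt qt Efun
  set C : ℝ := (2 * Real.pi) ^ (-(d : ℝ) / 2) * ((σt ^ 2) ^ d) ^ (-(1 : ℝ) / 2) with hC
  have hC_pos : 0 < C := by positivity
  have hKeq : ∀ θ θ0, K θ θ0
      = C * Real.exp (-(1 / 2) * ((σt ^ 2)⁻¹ * ∑ i, (θ i - θ0 i) ^ 2)) := fun θ θ0 =>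
    gaussDensity_smul_one_eq σt hσt θ0 θ
  have hK_nn : ∀ θ θ0, 0 ≤ K θ θ0 := fun θ θ0 => by
    rw [hKeq]; positivity
  have hK_le : ∀ θ θ0, K θ θ0 ≤ C := fun θ θ0 => by
    rw [hKeq]
    have h1 : Real.exp (-(1 / 2) * ((σt ^ 2)⁻¹ * ∑ i, (θ i - θ0 i) ^ 2)) ≤ 1 := by
      have h0 : (0:ℝ) ≤ (σt ^ 2)⁻¹ * ∑ i, (θ i - θ0 i) ^ 2 := by positivity
      calc Real.exp (-(1 / 2) * ((σt ^ 2)⁻¹ * ∑ i, (θ i - θ0 i) ^ 2)) ≤ Real.exp 0 :=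
            Real.exp_le_exp.mpr (by nlinarith)
        _ = 1 := Real.exp_zero
    nlinarith
  -- continuity of K in each argument
  have hproj : ∀ i : Fin d, Continuous fun θ : EuclideanSpace ℝ (Fin d) => θ i :=
    fun i => (EuclideanSpace.proj i : EuclideanSpace ℝ (Fin d) →L[ℝ] ℝ).continuous
  have hK_cont_left : ∀ θ0, Continuous fun θ => K θ θ0 := by
    intro θ0
    simp only [hKeq]
    apply continuous_const.mul
    apply Real.continuous_exp.comp
    apply continuous_const.mul
    apply continuous_const.mul
    exact continuous_finset_sum _ fun i _ => ((hproj i).sub continuous_const).pow 2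
  have hK_cont_right : ∀ θ, Continuous fun θ0 => K θ θ0 := by
    intro θ
    simp only [hKeq]
    apply continuous_const.mul
    apply Real.continuous_exp.comp
    apply continuous_const.mul
    apply continuous_const.mul
    exact continuous_finset_sum _ fun i _ => (continuous_const.sub (hproj i)).pow 2
  -- p0 is integrable
  have hp0_i : Integrable p0 := by
    by_contra h
    rw [integral_undef h] at hp0_int
    norm_num at hp0_int
  -- integrability of the kernel-weighted integrands
  have hint1 : ∀ θ, Integrable (fun θ0 => K θ θ0 * p0 θ0) := by
    intro θ
    refine (hp0_i.const_mul C).mono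
      (((hK_cont_right θ).aestronglyMeasurable).mul hp0_i.aestronglyMeasurable) ?_
    filter_upwards with θ0
    rw [Real.norm_eq_abs, Real.norm_eq_abs, abs_of_nonneg (mul_nonneg (hK_nn θ θ0) (hp0_nn θ0))]
    calc K θ θ0 * p0 θ0 ≤ C * p0 θ0 := by
          exact mul_le_mul_of_nonneg_right (hK_le θ θ0) (hp0_nn θ0)
      _ ≤ |C * p0 θ0| := le_abs_self _
  have hint2 : ∀ θ, Integrable (fun θ0 => K θ θ0 * (r θ0 * p0 θ0)) := by
    intro θ
    refine (hZ_int.const_mul C).mono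
      (((hK_cont_right θ).aestronglyMeasurable).mul
        (hr_meas.aestronglyMeasurable.mul hp0_i.aestronglyMeasurable)) ?_
    filter_upwards with θ0
    have hrp : 0 ≤ r θ0 * p0 θ0 := mul_nonneg (hr_nn θ0) (hp0_nn θ0)
    rw [Real.norm_eq_abs, Real.norm_eq_abs, abs_of_nonneg (mul_nonneg (hK_nn θ θ0) hrp)]
    calc K θ θ0 * (r θ0 * p0 θ0) ≤ C * (r θ0 * p0 θ0) :=
          mul_le_mul_of_nonneg_right (hK_le θ θ0) hrp
      _ ≤ |C * (r θ0 * p0 θ0)| := le_abs_self _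
  -- the common integral I
  set I : EuclideanSpace ℝ (Fin d) → ℝ :=
    fun θ => ∫ θ0, K θ θ0 * (r θ0 * p0 θ0) with hI
  have hqt : ∀ θ, qt θ = I θ / Z := by
    intro θ
    show (∫ θ0, K θ θ0 * (r θ0 * p0 θ0 / Z)) = _
    rw [hI, ← integral_div]
    exact integral_congr_ae (Filter.Eventually.of_forall fun θ0 => by ring)
  have hEfun : ∀ θ, Efun θ = I θ / pt θ := by
    intro θ
    show (∫ θ0, r θ0 * (K θ θ0 * p0 θ0 / pt θ)) = _
    rw [hI, ← integral_div]
    exact integral_congr_ae (Filter.Eventually.of_forall fun θ0 => by ring)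
  constructor
  · intro θt hpt
    rw [hqt, hEfun]
    field_simp
  · intro θt hpt hE hdp hdE
    have hIpos : 0 < I θt := by
      rw [hEfun θt] at hE
      exact (div_pos_iff.mp hE).resolve_right (fun h => absurd hpt (not_lt.mpr h.2.le)) |>.1
    -- continuity of pt and I at θt
    have hpt_cont : ContinuousAt pt θt := by
      apply continuousAt_of_dominated (bound := fun θ0 => C * |p0 θ0|)
        (Filter.Eventually.of_forall fun θ =>
          ((hK_cont_right θ).aestronglyMeasurable).mul hp0_i.aestronglyMeasurable)
        (Filter.Eventually.of_forall fun θ => Filter.Eventually.of_forall fun θ0 => ?_)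
        (hp0_i.abs.const_mul C)
        (Filter.Eventually.of_forall fun θ0 => ((hK_cont_left θ0).mul continuous_const).continuousAt)
      simp only [Pi.mul_apply, Real.norm_eq_abs, abs_mul]
      exact mul_le_mul_of_nonneg_right
        (by rw [abs_of_nonneg (hK_nn θ θ0)]; exact hK_le θ θ0) (abs_nonneg _)
    have hI_cont : ContinuousAt I θt := by
      apply continuousAt_of_dominated (bound := fun θ0 => C * |r θ0 * p0 θ0|)
        (Filter.Eventually.of_forall fun θ =>
          ((hK_cont_right θ).aestronglyMeasurable).mul
            (hr_meas.aestronglyMeasurable.mul hp0_i.aestronglyMeasurable))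
        (Filter.Eventually.of_forall fun θ => Filter.Eventually.of_forall fun θ0 => ?_)
        (hZ_int.abs.const_mul C)
        (Filter.Eventually.of_forall fun θ0 => ((hK_cont_left θ0).mul continuous_const).continuousAt)
      simp only [Pi.mul_apply, Real.norm_eq_abs, abs_mul]
      exact mul_le_mul_of_nonneg_right
        (by rw [abs_of_nonneg (hK_nn θ θ0)]; exact hK_le θ θ0)
        (mul_nonneg (abs_nonneg _) (abs_nonneg _))
    -- eventual positivity
    have hev_pt : ∀ᶠ θ in nhds θt, 0 < pt θ := hpt_cont.eventually (eventually_gt_nhds hpt)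
    have hev_I : ∀ᶠ θ in nhds θt, 0 < I θ := hI_cont.eventually (eventually_gt_nhds hIpos)
    -- eventual equality of logs
    have hev : (fun θ => Real.log (qt θ))
        =ᶠ[nhds θt] fun θ => Real.log (pt θ) + Real.log (Efun θ) - Real.log Z := by
      filter_upwards [hev_pt, hev_I] with θ h1 h2
      rw [hqt θ, hEfun θ, Real.log_div h2.ne' hZ_pos.ne', Real.log_div h2.ne' h1.ne']
      ring
    rw [hev.gradient_eq, gradient_add_sub_const _ _ _ _ hdp hdE]
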